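/- Let C be the [n,k]_q Reed–Solomon code with evaluation vector α = (α_1, …, α_n) of distinct elements of F_q. Suppose that for every two strictly increasing vectors I, J ∈ [n]^{2k−1} that agree on at most k − 1 coordinates, the (2k−1)×(2k−1) matrix V_{I,J}(α), whose row m is (1, α_{I_m}, …, α_{I_m}^{k−1}, α_{J_m}, …, α_{J_m}^{k−1}), has nonzero determinant. Then any two distinct codewords of C have a longest common subsequence of length at most 2k − 2; equivalently, the minimal fixed-length Levenshtein distance of C equals n − 2k + 2, i.e., C achieves the half-Singleton bound. -/

import Mathlib

/-- If the evaluation vector `α` of an `[n,k]_q` Reed–Solomon code satisfies the algebraic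
condition (for all strictly increasing `I, J ∈ [n]^{2k-1}` agreeing on at most `k - 1`
coordinates, the `(2k-1) × (2k-1)` matrix with row `m` equal to
`(1, α_{I_m}, …, α_{I_m}^{k-1}, α_{J_m}, …, α_{J_m}^{k-1})` is nonsingular), then any two
distinct codewords have a longest common subsequence of length at most `2k - 2`, i.e. the
code achieves the half-Singleton bound. -/
theorem rs_algebraic_condition_achieves_half_singleton
    {F : Type*} [Field F] [Fintype F] {n k : ℕ} (hk : 1 ≤ k) (hkn : k ≤ n)
    (α : Fin n → F) (hα : Function.Injective α)
    (hcond : ∀ I J : Fin (2 * k - 1) → Fin n, StrictMono I → StrictMono J →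
      (Finset.univ.filter fun m => I m = J m).card ≤ k - 1 →
      (Matrix.of fun m c : Fin (2 * k - 1) =>
        if (c : ℕ) = 0 then (1 : F)
        else if (c : ℕ) ≤ k - 1 then α (I m) ^ (c : ℕ)
        else α (J m) ^ ((c : ℕ) - (k - 1))).det ≠ 0) :
    ∀ f g : Polynomial F, f.degree < (k : ℕ) → g.degree < (k : ℕ) →
      (fun i : Fin n => Polynomial.eval (α i) f) ≠
        (fun i : Fin n => Polynomial.eval (α i) g) →
      ∀ z : List F, z.Sublist (List.ofFn fun i : Fin n => Polynomial.eval (α i) f) →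
        z.Sublist (List.ofFn fun i : Fin n => Polynomial.eval (α i) g) →
        z.length ≤ 2 * k - 2 := by
  intro f g hf hg hne z hzf hzg
  classical
  by_contra hlen
  push_neg at hlen
  -- so 2*k-1 ≤ z.length
  have hlen' : 2 * k - 1 ≤ z.length := by omega
  -- natDegree bounds
  have hfnd : f.natDegree < k := by
    rcases eq_or_ne f 0 with rfl | h
    · simpa using (show 0 < k by omega)
    · exact (Polynomial.natDegree_lt_iff_degree_lt h).mpr (by exact_mod_cast hf)
  have hgnd : g.natDegree < k := by
    rcases eq_or_ne g 0 with rfl | h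
    · simpa using (show 0 < k by omega)
    · exact (Polynomial.natDegree_lt_iff_degree_lt h).mpr (by exact_mod_cast hg)
  -- it suffices to show f = g
  suffices hfg : f = g by
    exact hne (by rw [hfg])
  -- extract order embeddings
  obtain ⟨eI, heI⟩ := List.sublist_iff_exists_fin_orderEmbedding_get_eq.mp hzf
  obtain ⟨eJ, heJ⟩ := List.sublist_iff_exists_fin_orderEmbedding_get_eq.mp hzg
  have hlf : (List.ofFn fun i : Fin n => Polynomial.eval (α i) f).length = n :=
    List.length_ofFn
  have hlg : (List.ofFn fun i : Fin n => Polynomial.eval (α i) g).length = n :=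
    List.length_ofFn
  set I : Fin (2 * k - 1) → Fin n :=
    fun m => Fin.cast hlf (eI (Fin.castLE hlen' m)) with hI
  set J : Fin (2 * k - 1) → Fin n :=
    fun m => Fin.cast hlg (eJ (Fin.castLE hlen' m)) with hJ
  have hImono : StrictMono I := fun a b hab => eI.strictMono hab
  have hJmono : StrictMono J := fun a b hab => eJ.strictMono hab
  -- key evaluations
  have hkey : ∀ m : Fin (2 * k - 1),
      Polynomial.eval (α (I m)) f = Polynomial.eval (α (J m)) g := by
    intro m
    have h1 := heI (Fin.castLE hlen' m)
    have h2 := heJ (Fin.castLE hlen' m)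
    rw [List.get_ofFn] at h1 h2
    have e1 : Polynomial.eval (α (I m)) f = z.get (Fin.castLE hlen' m) := by
      rw [h1]
    have e2 : Polynomial.eval (α (J m)) g = z.get (Fin.castLE hlen' m) := by
      rw [h2]
    rw [e1, e2]
  by_cases hagree : (Finset.univ.filter fun m => I m = J m).card ≤ k - 1
  · -- use the determinant condition
    have hdet := hcond I J hImono hJmono hagree
    set w : ℕ → F := fun c =>
      if c = 0 then f.coeff 0 - g.coeff 0
      else if c ≤ k - 1 then f.coeff c
      else -(g.coeff (c - (k - 1))) with hw
    set M := (Matrix.of fun m c : Fin (2 * k - 1) =>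
        if (c : ℕ) = 0 then (1 : F)
        else if (c : ℕ) ≤ k - 1 then α (I m) ^ (c : ℕ)
        else α (J m) ^ ((c : ℕ) - (k - 1))) with hM
    have hmv : M.mulVec (fun c => w (c : ℕ)) = 0 := by
      funext m
      have : M.mulVec (fun c => w (c : ℕ)) m =
          ∑ c : Fin (2 * k - 1), M m c * w (c : ℕ) := by
        simp [Matrix.mulVec, dotProduct]
      rw [this]
      have hsum : ∑ c : Fin (2 * k - 1), M m c * w (c : ℕ) =
          ∑ c ∈ Finset.range (2 * k - 1),
            ((if c = 0 then (1 : F)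
              else if c ≤ k - 1 then α (I m) ^ c
              else α (J m) ^ (c - (k - 1))) * w c) := by
        rw [← Fin.sum_univ_eq_sum_range (fun c =>
          ((if c = 0 then (1 : F)
            else if c ≤ k - 1 then α (I m) ^ c
            else α (J m) ^ (c - (k - 1))) * w c)) (2 * k - 1)]
        rfl
      rw [hsum, Pi.zero_apply]
      have hsplit : 2 * k - 1 = k + (k - 1) := by omega
      rw [hsplit, Finset.sum_range_add]
      have hfe : Polynomial.eval (α (I m)) f =
          ∑ c ∈ Finset.range k, f.coeff c * α (I m) ^ c :=
        Polynomial.eval_eq_sum_range' hfnd _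
      have hge : Polynomial.eval (α (J m)) g =
          ∑ c ∈ Finset.range k, g.coeff c * α (J m) ^ c :=
        Polynomial.eval_eq_sum_range' hgnd _
      have hk1 : k = (k - 1) + 1 := by omega
      have sum1 : ∑ c ∈ Finset.range k,
          ((if c = 0 then (1 : F)
            else if c ≤ k - 1 then α (I m) ^ c
            else α (J m) ^ (c - (k - 1))) * w c)
          = Polynomial.eval (α (I m)) f - g.coeff 0 := by
        rw [hfe, hk1, Finset.sum_range_succ', Finset.sum_range_succ']
        simp only [Nat.add_sub_cancel]
        have hterm : ∀ i ∈ Finset.range (k - 1),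
            ((if i + 1 = 0 then (1 : F)
              else if i + 1 ≤ k - 1 then α (I m) ^ (i + 1)
              else α (J m) ^ (i + 1 - (k - 1))) * w (i + 1))
            = f.coeff (i + 1) * α (I m) ^ (i + 1) := by
          intro i hi
          rw [Finset.mem_range] at hi
          have h1 : i + 1 ≤ k - 1 := by omega
          simp [hw, h1, mul_comm]
        rw [Finset.sum_congr rfl hterm]
        have h0 : w 0 = f.coeff 0 - g.coeff 0 := by simp [hw]
        rw [h0]
        simp only [if_true, eq_self_iff_true, pow_zero, one_mul, mul_one]
        ring
      have sum2 : ∑ c ∈ Finset.range (k - 1),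
          ((if k + c = 0 then (1 : F)
            else if k + c ≤ k - 1 then α (I m) ^ (k + c)
            else α (J m) ^ (k + c - (k - 1))) * w (k + c))
          = -(Polynomial.eval (α (J m)) g - g.coeff 0) := by
        rw [hge]
        conv_rhs => rw [hk1, Finset.sum_range_succ']
        have hterm : ∀ c ∈ Finset.range (k - 1),
            ((if k + c = 0 then (1 : F)
              else if k + c ≤ k - 1 then α (I m) ^ (k + c)
              else α (J m) ^ (k + c - (k - 1))) * w (k + c))
            = -(g.coeff (c + 1) * α (J m) ^ (c + 1)) := by
          intro c hc
          have h1 : ¬ (k + c = 0) := by omega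
          have h2 : ¬ (k + c ≤ k - 1) := by omega
          have h3 : k + c - (k - 1) = c + 1 := by omega
          simp [hw, h1, h2, h3, mul_comm, show k ≠ 0 by omega]
        rw [Finset.sum_congr rfl hterm, Finset.sum_neg_distrib]
        ring
      rw [sum1, sum2, hkey m]
      simp
    have hv0 := Matrix.eq_zero_of_mulVec_eq_zero hdet hmv
    -- extract coefficient equalities
    have hwz : ∀ c : ℕ, c < 2 * k - 1 → w c = 0 := by
      intro c hc
      have := congrFun hv0 ⟨c, hc⟩
      simpa using this
    have h0 : f.coeff 0 = g.coeff 0 := by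
      have := hwz 0 (by omega)
      simp only [hw, if_pos rfl] at this
      exact sub_eq_zero.mp this
    have hfc : ∀ c, 1 ≤ c → c ≤ k - 1 → f.coeff c = 0 := by
      intro c h1 h2
      have hc0 : c ≠ 0 := by omega
      have := hwz c (by omega)
      simpa [hw, hc0, h2] using this
    have hgc : ∀ c, 1 ≤ c → c ≤ k - 1 → g.coeff c = 0 := by
      intro c h1 h2
      have := hwz (c + (k - 1)) (by omega)
      have e1 : ¬ (c + (k - 1) = 0) := by omega
      have e2 : ¬ (c + (k - 1) ≤ k - 1) := by omega
      have e3 : c + (k - 1) - (k - 1) = c := by omega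
      simp [hw, e1, e2, e3, show c ≠ 0 by omega] at this
      exact this
    ext c
    rcases Nat.eq_zero_or_pos c with rfl | hc
    · exact h0
    rcases le_or_gt c (k - 1) with hck | hck
    · rw [hfc c hc hck, hgc c hc hck]
    · have hcf : f.coeff c = 0 := Polynomial.coeff_eq_zero_of_natDegree_lt (by omega)
      have hcg : g.coeff c = 0 := Polynomial.coeff_eq_zero_of_natDegree_lt (by omega)
      rw [hcf, hcg]
  · -- many agreements: f - g has ≥ k roots
    push_neg at hagree
    set S := (Finset.univ.filter fun m => I m = J m) with hS
    have hcardS : k ≤ S.card := by omega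
    have hroots : ∀ x ∈ S.image (fun m => α (I m)), (f - g).eval x = 0 := by
      intro x hx
      rw [Finset.mem_image] at hx
      obtain ⟨m, hm, rfl⟩ := hx
      rw [hS, Finset.mem_filter] at hm
      have := hkey m
      rw [hm.2] at this ⊢
      simp [this]
    have hcardim : k ≤ (S.image (fun m => α (I m))).card := by
      have hinj : Function.Injective fun m => α (I m) := fun a b h =>
        hImono.injective (hα h)
      rw [Finset.card_image_of_injective _ hinj]
      exact hcardS
    have hdeg : (f - g).natDegree < k := by
      calc (f - g).natDegree ≤ max f.natDegree g.natDegree := Polynomial.natDegree_sub_le f g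
        _ < k := by omega
    have : f - g = 0 :=
      Polynomial.eq_zero_of_natDegree_lt_card_of_eval_eq_zero' _ _ hroots
        (lt_of_lt_of_le hdeg hcardim)
    exact sub_eq_zero.mp this
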